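/- Let L_1, ..., L_m be continuous linear operators on 𝒟'(𝕋^N) preserving C^∞(𝕋^N), which pairwise commute: L_j L_k = L_k L_j for all j,k. If the composition L = L_1 ∘ ⋯ ∘ L_m is globally hypoelliptic, then each L_k is globally hypoelliptic. Conversely, if each L_k is globally hypoelliptic, then L is globally hypoelliptic (this direction does not need commutativity). -/

import Mathlib

section Aux

variable {V : Type*} [AddCommGroup V] [Module ℂ V] (S : Submodule ℂ V)

private def P (l : List (V →ₗ[ℂ] V)) : V →ₗ[ℂ] V :=
  l.foldr (fun f g => f ∘ₗ g) LinearMap.id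

private lemma P_cons (f : V →ₗ[ℂ] V) (l : List (V →ₗ[ℂ] V)) :
    P (f :: l) = f ∘ₗ P l := rfl

private lemma P_append (l₁ l₂ : List (V →ₗ[ℂ] V)) :
    P (l₁ ++ l₂) = P l₁ ∘ₗ P l₂ := by
  induction l₁ with
  | nil => simp [P]
  | cons f t ih => simp [P_cons, ih, LinearMap.comp_assoc]

private lemma P_preserves (l : List (V →ₗ[ℂ] V))
    (h : ∀ f ∈ l, ∀ u ∈ S, f u ∈ S) : ∀ u ∈ S, P l u ∈ S := by
  induction l with
  | nil => intro u hu; simpa [P] using hu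
  | cons f t ih =>
    intro u hu
    have := ih (fun g hg => h g (List.mem_cons_of_mem _ hg)) u hu
    simpa [P_cons] using h f (List.mem_cons_self) _ this

private lemma P_hypo (l : List (V →ₗ[ℂ] V))
    (h : ∀ f ∈ l, ∀ u : V, f u ∈ S → u ∈ S) :
    ∀ u : V, P l u ∈ S → u ∈ S := by
  induction l with
  | nil => intro u hu; simpa [P] using hu
  | cons f t ih =>
    intro u hu
    have h1 : f (P t u) ∈ S := by simpa [P_cons] using hu
    exact ih (fun g hg => h g (List.mem_cons_of_mem _ hg)) u
      (h f (List.mem_cons_self) _ h1)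

private lemma P_comm (g : V →ₗ[ℂ] V) (l : List (V →ₗ[ℂ] V))
    (h : ∀ f ∈ l, g ∘ₗ f = f ∘ₗ g) : g ∘ₗ P l = P l ∘ₗ g := by
  induction l with
  | nil => simp [P]
  | cons f t ih =>
    have ht := ih (fun f' hf' => h f' (List.mem_cons_of_mem _ hf'))
    calc g ∘ₗ P (f :: t) = (g ∘ₗ f) ∘ₗ P t := by
          simp [P_cons, LinearMap.comp_assoc]
      _ = f ∘ₗ (g ∘ₗ P t) := by
          rw [h f (List.mem_cons_self)]; simp [LinearMap.comp_assoc]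
      _ = P (f :: t) ∘ₗ g := by rw [ht]; simp [P_cons, LinearMap.comp_assoc]

end Aux

/-- Abstract form of Theorem 5(a): for pairwise commuting operators `L₁, …, L_m`
preserving the smooth subspace `S`, the composition `L = L₁ ∘ ⋯ ∘ L_m` is globally
hypoelliptic if and only if every factor `L_k` is globally hypoelliptic.  Here `V`
plays the role of `𝒟'(𝕋^N)` and `S` the role of `C^∞(𝕋^N)`. -/
theorem commuting_product_globally_hypoelliptic_iff
    (V : Type*) [AddCommGroup V] [Module ℂ V] (S : Submodule ℂ V)
    {m : ℕ} (L : Fin m → V →ₗ[ℂ] V)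
    (hL : ∀ j, ∀ u ∈ S, L j u ∈ S)
    (hcomm : ∀ j k, (L j) ∘ₗ (L k) = (L k) ∘ₗ (L j)) :
    (∀ u : V, ((List.ofFn L).foldr (fun f g => f ∘ₗ g) LinearMap.id) u ∈ S → u ∈ S) ↔
    (∀ k, ∀ u : V, L k u ∈ S → u ∈ S) := by
  have hmem : ∀ f ∈ List.ofFn L, ∃ j, f = L j := by
    intro f hf
    rcases List.mem_ofFn.mp hf with ⟨j, rfl⟩
    exact ⟨j, rfl⟩
  constructor
  · intro hP k u hu
    -- split the list at index k
    set l := List.ofFn L with hl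
    have hk : (k : ℕ) < l.length := by simp [hl, k.isLt]
    have hsplit : l = l.take k ++ L k :: l.drop (k + 1) := by
      have h1 := List.take_append_drop (k : ℕ) l
      have h2 : l.drop (k : ℕ) = L k :: l.drop ((k : ℕ) + 1) := by
        rw [List.drop_eq_getElem_cons hk]
        congr 1
        simp [hl]
      conv_lhs => rw [← h1, h2]
    have hdropmem : ∀ f ∈ l.drop ((k : ℕ) + 1), L k ∘ₗ f = f ∘ₗ L k := by
      intro f hf
      rcases hmem f (List.mem_of_mem_drop (by simpa [hl] using hf)) with ⟨j, rfl⟩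
      exact hcomm k j
    have key : P l u = P (l.take k) (P (l.drop (k + 1)) (L k u)) := by
      conv_lhs => rw [hsplit]
      rw [P_append, P_cons]
      simp only [LinearMap.comp_apply]
      have := congrArg (fun f => f u) (P_comm (L k) (l.drop (k + 1)) hdropmem)
      simp only [LinearMap.comp_apply] at this
      exact congrArg (P (l.take k)) this
    have hin : P l u ∈ S := by
      rw [key]
      apply P_preserves S
      · intro f hf
        rcases hmem f (List.mem_of_mem_take (by simpa [hl] using hf)) with ⟨j, rfl⟩
        exact hL j
      · apply P_preserves S
        · intro f hf
          rcases hmem f (List.mem_of_mem_drop (by simpa [hl] using hf)) with ⟨j, rfl⟩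
          exact hL j
        · exact hu
    exact hP u hin
  · intro hk u hu
    refine P_hypo S (List.ofFn L) ?_ u hu
    intro f hf
    rcases hmem f hf with ⟨j, rfl⟩
    exact hk j
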